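/- For the Chebyshev coefficients c_0 = 1, c_k = (−1)^{k+1}·2/(4k²−1) (k ≥ 1) of y(t) = (π/4)√(2(t+1)), the pole λ_p = (c'_p + c_{p+2})/(2c_{p+1}) of the (p,1) Chebyshev–Padé approximant equals λ_p = −1 − 3/((p−1/2)(p+5/2)) for all p ≥ 1. In particular λ_p < −1 and λ_p → −1 as p → ∞. -/

import Mathlib

open Filter

/-- The exact Chebyshev coefficients of `y(t) = (π/4)·√(2(t+1))`. -/
noncomputable def chebCoeff : ℕ → ℝ :=
  fun k => if k = 0 then 1 else (-1 : ℝ) ^ (k + 1) * (2 / (4 * (k : ℝ) ^ 2 - 1))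

/-- Pole of the `(p,1)` Chebyshev–Padé approximant (for `p ≥ 1`, `c'_p = c_p`). -/
noncomputable def chebPole : ℕ → ℝ :=
  fun p => (chebCoeff p + chebCoeff (p + 2)) / (2 * chebCoeff (p + 1))

lemma chebPole_formula (p : ℕ) (hp : 1 ≤ p) :
    chebPole p = -1 - 3 / (((p : ℝ) - 1 / 2) * ((p : ℝ) + 5 / 2)) := by
  have hp0 : p ≠ 0 := by omega
  have hx : (1 : ℝ) ≤ (p : ℝ) := by exact_mod_cast hp
  have h1 : 4 * (p:ℝ) ^ 2 - 1 ≠ 0 := by nlinarith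
  have h2 : 4 * ((p:ℝ) + 1) ^ 2 - 1 ≠ 0 := by nlinarith
  have h3 : 4 * ((p:ℝ) + 2) ^ 2 - 1 ≠ 0 := by nlinarith
  have h4 : (p:ℝ) - 1 / 2 ≠ 0 := by nlinarith
  have h5 : (p:ℝ) + 5 / 2 ≠ 0 := by nlinarith
  simp only [chebPole, chebCoeff, hp0, if_neg, Nat.add_eq_zero, and_false, false_and, if_false,
    Nat.cast_add, Nat.cast_one, Nat.cast_ofNat]
  have e2 : (-1 : ℝ) ^ (p + 2 + 1) = (-1) ^ (p + 1) := by
    rw [show p + 2 + 1 = (p + 1) + 2 by ring, pow_add]; norm_num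
  have e1 : (-1 : ℝ) ^ (p + 1 + 1) = -(-1) ^ (p + 1) := by
    rw [pow_succ]; ring
  rw [e1, e2]
  have hq : ((p:ℝ) * 2 - 1) * ((p:ℝ) * 2 + 5) ≠ 0 := by nlinarith
  rcases Nat.even_or_odd (p + 1) with h | h
  · rw [h.neg_one_pow]; field_simp [hq, (by linarith : (2:ℝ) * p - 1 ≠ 0)]; ring
  · rw [h.neg_one_pow]; field_simp [hq, (by linarith : (2:ℝ) * p - 1 ≠ 0)]; ring

/-- for the Chebyshev coefficients of `(π/4)√(2(t+1))`, the pole of the `(p,1)`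
Chebyshev–Padé approximant equals `−1 − 3/((p−1/2)(p+5/2))` for all `p ≥ 1`; in particular
`λ_p < −1` and `λ_p → −1` as `p → ∞`. -/
theorem chebyshev_pade_pole_formula :
    (∀ p : ℕ, 1 ≤ p →
      chebPole p = -1 - 3 / (((p : ℝ) - 1 / 2) * ((p : ℝ) + 5 / 2))) ∧
    (∀ p : ℕ, 1 ≤ p → chebPole p < -1) ∧
    Tendsto chebPole atTop (nhds (-1)) := by
  refine ⟨fun p hp => chebPole_formula p hp, fun p hp => ?_, ?_⟩
  · rw [chebPole_formula p hp]
    have hx : (1 : ℝ) ≤ (p : ℝ) := by exact_mod_cast hp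
    have h4 : (0:ℝ) < (p : ℝ) - 1 / 2 := by linarith
    have h5 : (0:ℝ) < (p : ℝ) + 5 / 2 := by linarith
    have : 0 < 3 / (((p : ℝ) - 1 / 2) * ((p : ℝ) + 5 / 2)) := by positivity
    linarith
  · have hlim : Tendsto (fun p : ℕ => -1 - 3 / (((p : ℝ) - 1 / 2) * ((p : ℝ) + 5 / 2)))
        atTop (nhds (-1)) := by
      have hden : Tendsto (fun p : ℕ => (((p : ℝ) - 1 / 2) * ((p : ℝ) + 5 / 2))) atTop atTop := by
        apply Tendsto.atTop_mul_atTop₀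
        · exact tendsto_atTop_add_const_right _ _ tendsto_natCast_atTop_atTop
        · exact tendsto_atTop_add_const_right _ _ tendsto_natCast_atTop_atTop
      have := Tendsto.div_atTop (tendsto_const_nhds : Tendsto (fun _ : ℕ => (3:ℝ)) atTop (nhds 3)) hden
      have h := (tendsto_const_nhds : Tendsto (fun _ : ℕ => (-1:ℝ)) atTop (nhds (-1))).sub this
      simpa using h
    refine Tendsto.congr' ?_ hlim
    filter_upwards [eventually_ge_atTop 1] with p hp
    exact (chebPole_formula p hp).symm
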